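/- For positive integers s, a, t and rank r, D(Z_{s^a}^{r−1} ⊕ Z_{s^a t}) ≤ D(Z_{s^a}^r) · t. -/

import Mathlib

/-- The Davenport constant: the smallest `d` such that every multiset of `d`
elements of `G` contains a nonempty zero-sum sub-multiset. -/
noncomputable def davenport (G : Type*) [AddCommGroup G] : ℕ :=
  sInf {d | ∀ S : Multiset G, Multiset.card S = d →
    ∃ T, T ≤ S ∧ T ≠ 0 ∧ T.sum = 0}

section Aux

/-- Lift a sub-multiset of a mapped multiset. -/
lemma dav_exists_preimage_of_le_map {α β : Type*} (f : α → β) :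
    ∀ (S : Multiset α) (T : Multiset β), T ≤ S.map f → ∃ U, U ≤ S ∧ U.map f = T := by
  classical
  intro S
  induction S using Multiset.induction_on with
  | empty =>
      intro T hT
      rw [Multiset.map_zero, Multiset.le_zero] at hT
      exact ⟨0, le_rfl, by simp [hT]⟩
  | cons a S ih =>
      intro T hT
      rw [Multiset.map_cons] at hT
      by_cases h : f a ∈ T
      · have h1 := Multiset.erase_le_erase (f a) hT
        rw [Multiset.erase_cons_head] at h1
        obtain ⟨U, hU, hUm⟩ := ih _ h1
        refine ⟨a ::ₘ U, Multiset.cons_le_cons _ hU, ?_⟩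
        rw [Multiset.map_cons, hUm, Multiset.cons_erase h]
      · have h1 : T ≤ S.map f := (Multiset.le_cons_of_notMem h).mp hT
        obtain ⟨U, hU, hUm⟩ := ih _ h1
        exact ⟨U, le_trans hU (Multiset.le_cons_self _ _), hUm⟩

/-- Extract a fixed-size sub-multiset. -/
lemma dav_exists_sub_card {α : Type*} (S : Multiset α) (d : ℕ) (h : d ≤ Multiset.card S) :
    ∃ S', S' ≤ S ∧ Multiset.card S' = d := by
  refine ⟨(S.toList.take d : List α), ?_, ?_⟩
  · have h1 : (S.toList.take d).Sublist S.toList := List.take_sublist _ _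
    have h2 : ((S.toList.take d : List α) : Multiset α) ≤ (S.toList : Multiset α) := h1.subperm
    rwa [Multiset.coe_toList] at h2
  · have : S.toList.length = Multiset.card S := Multiset.length_toList S
    simp only [Multiset.coe_card, List.length_take]
    omega

/-- Pigeonhole on partial sums: a long list over a finite group has a
consecutive zero-sum block. -/
lemma dav_exists_block {G : Type*} [AddCommGroup G] [Fintype G] (l : List G)
    (h : Fintype.card G ≤ l.length) :
    ∃ i k, i < k ∧ k ≤ l.length ∧ ((l.drop i).take (k - i)).sum = 0 := by
  have hcard : Fintype.card G < Fintype.card (Fin (l.length + 1)) := by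
    simp only [Fintype.card_fin]; omega
  obtain ⟨x, y, hxy, he⟩ := Fintype.exists_ne_map_eq_of_card_lt
    (fun j : Fin (l.length + 1) => (l.take (j : ℕ)).sum) hcard
  have key : ∀ i k : ℕ, i < k → k ≤ l.length → (l.take i).sum = (l.take k).sum →
      ∃ i' k', i' < k' ∧ k' ≤ l.length ∧ ((l.drop i').take (k' - i')).sum = 0 := by
    intro i k hik hk hsum
    refine ⟨i, k, hik, hk, ?_⟩
    have hdecomp : l.take k = l.take i ++ (l.drop i).take (k - i) := by
      have hik' : k = i + (k - i) := by omega
      conv_lhs => rw [hik', List.take_add]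
    rw [hdecomp, List.sum_append, left_eq_add] at hsum
    exact hsum
  have hxy' : (x : ℕ) ≠ (y : ℕ) := fun hc => hxy (Fin.ext hc)
  rcases lt_or_gt_of_ne hxy' with hlt | hlt
  · exact key x y hlt (by omega) he
  · exact key y x hlt (by omega) he.symm

/-- Every multiset of at least `|G|` elements has a nonempty zero-sum sub-multiset. -/
lemma dav_card_spec {G : Type*} [AddCommGroup G] [Fintype G] (S : Multiset G)
    (hS : Fintype.card G ≤ Multiset.card S) :
    ∃ T, T ≤ S ∧ T ≠ 0 ∧ T.sum = 0 := by
  set l := S.toList with hl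
  have hlen : l.length = Multiset.card S := Multiset.length_toList S
  obtain ⟨i, k, hik, hk, hsum⟩ := dav_exists_block l (by omega)
  refine ⟨((l.drop i).take (k - i) : List G), ?_, ?_, by simpa using hsum⟩
  · have h1 : ((l.drop i).take (k - i)).Sublist l :=
      ((l.drop i).take_sublist _).trans (l.drop_sublist i)
    have h2 : (((l.drop i).take (k - i) : List G) : Multiset G) ≤ (l : Multiset G) := h1.subperm
    rwa [hl, Multiset.coe_toList] at h2
  · have hlen2 : ((l.drop i).take (k - i)).length = k - i := by
      rw [List.length_take, List.length_drop]; omega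
    intro hc
    rw [Multiset.coe_eq_zero] at hc
    rw [hc] at hlen2
    simp at hlen2
    omega

/-- The defining set of the Davenport constant attains its infimum. -/
lemma dav_spec (G : Type*) [AddCommGroup G] [Fintype G] (S : Multiset G)
    (hS : davenport G ≤ Multiset.card S) :
    ∃ T, T ≤ S ∧ T ≠ 0 ∧ T.sum = 0 := by
  have hne : {d | ∀ S : Multiset G, Multiset.card S = d →
      ∃ T, T ≤ S ∧ T ≠ 0 ∧ T.sum = 0}.Nonempty :=
    ⟨Fintype.card G, fun S hS => dav_card_spec S (le_of_eq hS.symm)⟩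
  have hmem := Nat.sInf_mem hne
  obtain ⟨S', hS'le, hS'card⟩ := dav_exists_sub_card S (davenport G) hS
  obtain ⟨T, hT, hT0, hTs⟩ := hmem S' hS'card
  exact ⟨T, le_trans hT hS'le, hT0, hTs⟩

lemma dav_pos (G : Type*) [AddCommGroup G] [Fintype G] : 0 < davenport G := by
  by_contra hc
  push_neg at hc
  obtain ⟨T, hT, hT0, -⟩ := dav_spec G 0 (by simpa using Nat.le_zero.mp hc)
  exact hT0 (Multiset.le_zero.mp hT)

lemma dav_sum_le_of_sublist {α : Type*} {l₁ l₂ : List (Multiset α)} (h : l₁.Sublist l₂) :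
    l₁.sum ≤ l₂.sum := by
  induction h with
  | slnil => simp
  | cons a h ih =>
      rw [List.sum_cons]
      exact le_trans ih (Multiset.le_add_left _ _)
  | cons_cons a h ih =>
      rw [List.sum_cons, List.sum_cons]
      exact add_le_add_right ih a

lemma dav_sum_sum {M : Type*} [AddCommMonoid M] :
    ∀ l : List (Multiset M), (l.sum).sum = (l.map Multiset.sum).sum := by
  intro l
  induction l with
  | nil => simp
  | cons a l ih => simp [Multiset.sum_add, ih]

/-- Iterated extraction: from a multiset of size at least `D·k` one can extract
`k` disjoint nonempty pieces each of which is zero-sum under `φ`. -/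
lemma dav_extract {G G' : Type*} [AddCommGroup G] [AddCommGroup G'] [Fintype G']
    (φ : G →+ G') :
    ∀ (k : ℕ) (S : Multiset G), davenport G' * k ≤ Multiset.card S →
      ∃ L : List (Multiset G), L.length = k ∧ (∀ T ∈ L, T ≠ 0 ∧ φ T.sum = 0) ∧ L.sum ≤ S := by
  classical
  intro k
  induction k with
  | zero => intro S _; exact ⟨[], rfl, by simp, by simp⟩
  | succ k ih =>
      intro S hS
      have hD : 0 < davenport G' := dav_pos G'
      have hDS : davenport G' ≤ Multiset.card S := by nlinarith
      obtain ⟨S₀, hS₀le, hS₀card⟩ := dav_exists_sub_card S (davenport G') hDS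
      have hmap : davenport G' ≤ Multiset.card (S₀.map φ) := by
        rw [Multiset.card_map, hS₀card]
      obtain ⟨T', hT'le, hT'0, hT's⟩ := dav_spec G' (S₀.map φ) hmap
      obtain ⟨U, hUle, hUm⟩ := dav_exists_preimage_of_le_map φ S₀ T' hT'le
      have hU0 : U ≠ 0 := by
        intro hc; rw [hc] at hUm; simp at hUm; exact hT'0 hUm.symm
      have hUs : φ U.sum = 0 := by
        rw [φ.map_multiset_sum, hUm, hT's]
      have hUcard : Multiset.card U ≤ davenport G' := by
        have h1 : Multiset.card U = Multiset.card T' := by rw [← hUm, Multiset.card_map]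
        have h2 : Multiset.card T' ≤ Multiset.card (S₀.map φ) := Multiset.card_le_card hT'le
        rw [Multiset.card_map, hS₀card] at h2
        omega
      have hUleS : U ≤ S := le_trans hUle hS₀le
      have hsub : davenport G' * k ≤ Multiset.card (S - U) := by
        rw [Multiset.card_sub hUleS]
        have hle := Multiset.card_le_card hUleS
        have hexp : davenport G' * (k + 1) = davenport G' * k + davenport G' := by ring
        omega
      obtain ⟨L, hLlen, hLprop, hLsum⟩ := ih (S - U) hsub
      refine ⟨U :: L, by simp [hLlen], ?_, ?_⟩
      · intro T hT
        rcases List.mem_cons.mp hT with rfl | hT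
        · exact ⟨hU0, hUs⟩
        · exact hLprop T hT
      · rw [List.sum_cons]
        have : L.sum ≤ S - U := hLsum
        exact (le_tsub_iff_left hUleS).mp this

end Aux

theorem davenport_lemma3 (s a t r : ℕ) (hs : 0 < s) (ha : 0 < a) (ht : 0 < t)
    (hr : 0 < r) :
    davenport ((Fin (r - 1) → ZMod (s ^ a)) × ZMod (s ^ a * t)) ≤
      davenport (Fin r → ZMod (s ^ a)) * t := by
  classical
  set q := s ^ a with hq
  have hq0 : 0 < q := pow_pos hs a
  haveI : NeZero q := ⟨hq0.ne'⟩
  haveI : NeZero t := ⟨ht.ne'⟩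
  haveI : NeZero (q * t) := ⟨by positivity⟩
  have hdvd : q ∣ q * t := ⟨t, rfl⟩
  let π : ZMod (q * t) →+ ZMod q := (ZMod.castHom hdvd (ZMod q)).toAddMonoidHom
  let φ : ((Fin (r - 1) → ZMod q) × ZMod (q * t)) →+ (Fin r → ZMod q) :=
    { toFun := fun v i => if h : (i : ℕ) < r - 1 then v.1 ⟨i, h⟩ else π v.2
      map_zero' := by
        funext i; by_cases h : (i : ℕ) < r - 1 <;> simp [h]
      map_add' := by
        intro v w; funext i; by_cases h : (i : ℕ) < r - 1 <;> simp [h] }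
  have hφ0 : ∀ σ : (Fin (r - 1) → ZMod q) × ZMod (q * t), φ σ = 0 → σ.1 = 0 ∧ π σ.2 = 0 := by
    intro σ hσ
    constructor
    · funext j
      have hj : (j : ℕ) < r - 1 := j.2
      have hcf := congrFun hσ ⟨(j : ℕ), lt_of_lt_of_le hj (Nat.sub_le r 1)⟩
      simp only [φ, AddMonoidHom.coe_mk, ZeroHom.coe_mk, Pi.zero_apply, dif_pos hj] at hcf
      simpa using hcf
    · have hlast : ¬ ((r - 1 : ℕ) < r - 1) := lt_irrefl _
      have hcf := congrFun hσ ⟨r - 1, by omega⟩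
      simp only [φ, AddMonoidHom.coe_mk, ZeroHom.coe_mk, Pi.zero_apply, dif_neg hlast] at hcf
      exact hcf
  apply Nat.sInf_le
  intro S hScard
  obtain ⟨L, hLlen, hLprop, hLsum⟩ := dav_extract φ t S (by rw [hScard])
  have hdiv : ∀ T ∈ L, q ∣ (T.sum).2.val := by
    intro T hT
    have hπ := (hφ0 T.sum (hLprop T hT).2).2
    have hcast : ((T.sum).2.val : ZMod q) = 0 := by
      have h1 : π (T.sum).2 = ZMod.cast (T.sum).2 := rfl
      rw [h1] at hπ
      rw [ZMod.natCast_val]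
      exact hπ
    exact (ZMod.natCast_eq_zero_iff _ _).mp hcast
  set c : Multiset ((Fin (r - 1) → ZMod q) × ZMod (q * t)) → ℕ :=
    fun T => (T.sum).2.val / q with hc
  have hcval : ∀ T ∈ L, q * c T = (T.sum).2.val := by
    intro T hT
    exact Nat.mul_div_cancel' (hdiv T hT)
  have hzlen : ((L.map c).map (Nat.cast : ℕ → ZMod t)).length = t := by
    simp [hLlen]
  have hcardt : Fintype.card (ZMod t) ≤ ((L.map c).map (Nat.cast : ℕ → ZMod t)).length := by
    rw [hzlen, ZMod.card t]
  obtain ⟨i, k, hik, hk, hbsum⟩ := dav_exists_block _ hcardt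
  rw [hzlen] at hk
  set B : List (Multiset ((Fin (r - 1) → ZMod q) × ZMod (q * t))) :=
    (L.drop i).take (k - i) with hB
  have hBsub : B.Sublist L := ((L.drop i).take_sublist _).trans (L.drop_sublist i)
  have hBlen : B.length = k - i := by
    rw [hB, List.length_take, List.length_drop, hLlen]; omega
  have hblock : ((((L.map c).map (Nat.cast : ℕ → ZMod t)).drop i).take (k - i))
      = (B.map c).map (Nat.cast : ℕ → ZMod t) := by
    rw [hB]
    simp [List.map_take, List.map_drop]
  rw [hblock] at hbsum
  have htdvd : t ∣ (B.map c).sum := by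
    rw [← Nat.cast_list_sum] at hbsum
    exact (ZMod.natCast_eq_zero_iff _ _).mp hbsum
  refine ⟨B.sum, le_trans (dav_sum_le_of_sublist hBsub) hLsum, ?_, ?_⟩
  · have hBne : B ≠ [] := by
      intro hc'
      rw [hc'] at hBlen
      simp at hBlen
      omega
    obtain ⟨T₀, B', hcons⟩ := List.exists_cons_of_ne_nil hBne
    intro hzero
    rw [hcons, List.sum_cons] at hzero
    have hT₀0 : T₀ = 0 :=
      Multiset.le_zero.mp (le_of_le_of_eq (Multiset.le_add_right _ _) hzero)
    have hT₀L : T₀ ∈ L := hBsub.mem (by rw [hcons]; exact List.mem_cons_self)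
    exact (hLprop T₀ hT₀L).1 hT₀0
  · rw [dav_sum_sum]
    have hmemL : ∀ T ∈ B, T ∈ L := fun T hT => hBsub.mem hT
    refine Prod.ext ?_ ?_
    · -- first components
      have h1 : ((B.map Multiset.sum).sum).1
          = ((B.map Multiset.sum).map Prod.fst).sum :=
        map_list_sum (AddMonoidHom.fst (Fin (r - 1) → ZMod q) (ZMod (q * t))) _
      rw [h1, List.map_map]
      rw [show (0 : (Fin (r - 1) → ZMod q) × ZMod (q * t)).1 = 0 from rfl]
      apply List.sum_eq_zero
      intro x hx
      obtain ⟨T, hT, rfl⟩ := List.mem_map.mp hx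
      simp only [Function.comp_apply]
      exact (hφ0 T.sum (hLprop T (hmemL T hT)).2).1
    · -- second components
      have h2 : ((B.map Multiset.sum).sum).2
          = ((B.map Multiset.sum).map Prod.snd).sum :=
        map_list_sum (AddMonoidHom.snd (Fin (r - 1) → ZMod q) (ZMod (q * t))) _
      rw [h2, List.map_map]
      rw [show (0 : (Fin (r - 1) → ZMod q) × ZMod (q * t)).2 = 0 from rfl]
      have hcongr : B.map (Prod.snd ∘ Multiset.sum)
          = B.map (fun T => ((q * c T : ℕ) : ZMod (q * t))) := by
        apply List.map_congr_left
        intro T hT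
        have hv := hcval T (hmemL T hT)
        simp only [Function.comp_apply]
        rw [hv, ZMod.natCast_val, ZMod.cast_id]
      rw [hcongr]
      have hsum2 : (B.map (fun T => ((q * c T : ℕ) : ZMod (q * t)))).sum
          = (((B.map (fun T => q * c T)).sum : ℕ) : ZMod (q * t)) := by
        rw [Nat.cast_list_sum, List.map_map]
        rfl
      rw [hsum2]
      have hmul : (B.map (fun T => q * c T)).sum = q * (B.map c).sum :=
        List.sum_map_mul_left B c q
      obtain ⟨m, hm⟩ := htdvd
      rw [hmul, hm, ← mul_assoc]
      push_cast
      rw [show ((q : ZMod (q * t)) * t = ((q * t : ℕ) : ZMod (q * t))) by push_cast; ring]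
      rw [ZMod.natCast_self, zero_mul]
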